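/- Over the field 𝔽_7, let f(x) = x⁴ + x³ + 3x². Then f'(x) = 4x³ + 3x² + 6x, the set of critical values of f is R = {0, 1, 3}, and for the shifts (h₁, h₂, h₃, h₄) = (0, 1, 2, 4), every element of 𝔽_7 that lies in some translate h_i + R lies in exactly two such translates (counted with multiplicity in the multiset union of h₁+R, h₂+R, h₃+R, h₄+R). -/
import Mathlib


open Polynomial

theorem degenerate_example_F7 :
    (derivative (X ^ 4 + X ^ 3 + C 3 * X ^ 2 : (ZMod 7)[X]) =
      C 4 * X ^ 3 + C 3 * X ^ 2 + C 6 * X) ∧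
    ({y : ZMod 7 | ∃ x : ZMod 7,
        (derivative (X ^ 4 + X ^ 3 + C 3 * X ^ 2 : (ZMod 7)[X])).eval x = 0 ∧
        (X ^ 4 + X ^ 3 + C 3 * X ^ 2 : (ZMod 7)[X]).eval x = y} = {0, 1, 3}) ∧
    (∀ z : ZMod 7,
      z ∈ (Finset.univ : Finset (Fin 4)).val.bind
          (fun i => (({0, 1, 3} : Finset (ZMod 7)).val.map
            (fun r => (![0, 1, 2, 4] : Fin 4 → ZMod 7) i + r))) →
      Multiset.count z
        ((Finset.univ : Finset (Fin 4)).val.bind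
          (fun i => (({0, 1, 3} : Finset (ZMod 7)).val.map
            (fun r => (![0, 1, 2, 4] : Fin 4 → ZMod 7) i + r)))) = 2) := by
  have hd : derivative (X ^ 4 + X ^ 3 + C 3 * X ^ 2 : (ZMod 7)[X]) =
      C 4 * X ^ 3 + C 3 * X ^ 2 + C 6 * X := by
    simp [derivative_pow]
    ring_nf
    rw [show (C 3 * C 2 : (ZMod 7)[X]) = C 6 by rw [← C_mul]; congr 1]
    ring
  refine ⟨hd, ?_, ?_⟩
  · ext y
    simp only [Set.mem_setOf_eq, hd, eval_add, eval_mul, eval_pow, eval_X, eval_C,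
      Set.mem_insert_iff, Set.mem_singleton_iff]
    constructor
    · rintro ⟨x, hx, rfl⟩
      revert hx
      revert x
      decide
    · intro hy
      rcases hy with rfl | rfl | rfl
      · exact ⟨0, by decide, by decide⟩
      · exact ⟨2, by decide, by decide⟩
      · exact ⟨6, by decide, by decide⟩
  · decide
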